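/- If a graph G of order n has minimum degree sum over non-adjacent vertex pairs at least n-1 (i.e., σ(G) ≥ n−1), then G is traceable (has a Hamiltonian path). -/

import Mathlib

open Finset SimpleGraph
set_option linter.unusedSectionVars false

variable {V : Type} [Fintype V] [DecidableEq V] {G : SimpleGraph V} [DecidableRel G.Adj]

/-- cyclic list predicate -/
def Cyc (G : SimpleGraph V) (c : List V) : Prop :=
  c.Chain' G.Adj ∧ ∀ x ∈ c.getLast?, ∀ y ∈ c.head?, G.Adj x y

lemma cyc_rotate_one {c : List V} (hc : Cyc G c) : Cyc G (c.rotate 1) := by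
  obtain ⟨h1, h2⟩ := hc
  match c with
  | [] => exact ⟨List.isChain_nil, by simp⟩
  | [a] => rw [List.rotate_singleton]; exact ⟨h1, h2⟩
  | a :: b :: t =>
      rw [List.rotate_cons_succ, List.rotate_zero]
      constructor
      · rw [List.Chain', List.isChain_append]
        refine ⟨(List.isChain_cons_cons.1 h1).2, List.isChain_singleton a, ?_⟩
        intro x hx y hy
        simp only [List.head?_cons, Option.mem_some_iff] at hy
        subst hy
        exact h2 x (by simpa using hx) a rfl
      · intro x hx y hy
        rw [List.getLast?_append_of_ne_nil _ (by simp)] at hx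
        simp only [List.getLast?_singleton, Option.mem_some_iff] at hx
        rw [List.head?_append_of_ne_nil _ (by simp), List.head?_cons,
          Option.mem_some_iff] at hy
        subst hx; subst hy
        exact (List.isChain_cons_cons.1 h1).1

lemma cyc_rotate {c : List V} (hc : Cyc G c) (n : ℕ) : Cyc G (c.rotate n) := by
  induction n with
  | zero => simpa using hc
  | succ n ih =>
      have : c.rotate (n + 1) = (c.rotate n).rotate 1 := by
        rw [List.rotate_rotate]
      rw [this]
      exact cyc_rotate_one ih

lemma cross_edge (hσ : ∀ u v : V, u ≠ v → ¬ G.Adj u v →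
      Fintype.card V - 1 ≤ G.degree u + G.degree v)
    (S : Finset V) (hS : S.Nonempty) (hS' : S ≠ Finset.univ) :
    ∃ x ∈ S, ∃ y ∉ S, G.Adj x y := by
  by_contra hcon
  push_neg at hcon
  obtain ⟨u, hu⟩ := hS
  have : Sᶜ.Nonempty := by
    rw [← Finset.card_pos, Finset.card_compl]
    have := Finset.card_lt_card (Finset.ssubset_univ_iff.2 hS')
    rw [Finset.card_univ] at this
    omega
  obtain ⟨w, hw⟩ := this
  rw [Finset.mem_compl] at hw
  have hne : u ≠ w := fun h => hw (h ▸ hu)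
  have hna : ¬ G.Adj u w := hcon u hu w hw
  have h1 : G.degree u ≤ S.card - 1 := by
    rw [← card_neighborFinset_eq_degree]
    have hsub : G.neighborFinset u ⊆ S.erase u := by
      intro y hy
      rw [mem_neighborFinset] at hy
      refine Finset.mem_erase.2 ⟨fun h => G.loopless.irrefl u (h ▸ hy), ?_⟩
      by_contra hyS
      exact hcon u hu y hyS hy
    calc (G.neighborFinset u).card ≤ (S.erase u).card := Finset.card_le_card hsub
      _ = S.card - 1 := Finset.card_erase_of_mem hu
  have h2 : G.degree w ≤ Sᶜ.card - 1 := by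
    rw [← card_neighborFinset_eq_degree]
    have hsub : G.neighborFinset w ⊆ Sᶜ.erase w := by
      intro y hy
      rw [mem_neighborFinset] at hy
      refine Finset.mem_erase.2 ⟨fun h => G.loopless.irrefl w (h ▸ hy), Finset.mem_compl.2 ?_⟩
      intro hyS
      exact hcon y hyS w hw hy.symm
    calc (G.neighborFinset w).card ≤ (Sᶜ.erase w).card := Finset.card_le_card hsub
      _ = Sᶜ.card - 1 := Finset.card_erase_of_mem (Finset.mem_compl.2 hw)
  have h3 := hσ u w hne hna
  have h4 : S.card + Sᶜ.card = Fintype.card V := by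
    rw [Finset.card_compl]
    have := Finset.card_le_univ S
    omega
  have hS1 : 1 ≤ S.card := Finset.card_pos.2 ⟨u, hu⟩
  have hS2 : 1 ≤ Sᶜ.card := Finset.card_pos.2 ⟨w, Finset.mem_compl.2 hw⟩
  omega

lemma exists_walk_of_chain : ∀ (l : List V), l ≠ [] → l.Chain' G.Adj →
    ∃ (u v : V) (p : G.Walk u v), p.support = l := by
  intro l
  induction l with
  | nil => intro h; exact absurd rfl h
  | cons a t ih =>
      intro _ hc
      match t, hc with
      | [], _ => exact ⟨a, a, Walk.nil, rfl⟩
      | b :: t', hc =>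
          obtain ⟨hab, hc'⟩ := List.isChain_cons_cons.1 hc
          obtain ⟨u, v, p, hp⟩ := ih (by simp) hc'
          -- u = b since support starts with u
          have hu : u = b := by
            have h2 := p.support_eq_cons
            rw [hp] at h2
            injection h2 with h _
            exact h.symm
          subst hu
          exact ⟨a, v, Walk.cons hab p, by simp [hp]⟩

lemma cyc_extend (hσ : ∀ u v : V, u ≠ v → ¬ G.Adj u v →
      Fintype.card V - 1 ≤ G.degree u + G.degree v)
    {c : List V} (hc : Cyc G c) (hnd : c.Nodup) (h2 : c ≠ [])
    (hlt : c.length < Fintype.card V) :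
    ∃ l' : List V, l' ≠ [] ∧ l'.Chain' G.Adj ∧ l'.Nodup ∧ l'.length = c.length + 1 := by
  have hcard : c.toFinset.card = c.length := List.toFinset_card_of_nodup hnd
  have hSne : c.toFinset.Nonempty := by
    rw [← Finset.card_pos, hcard]
    exact List.length_pos_iff.2 h2
  have hSne' : c.toFinset ≠ Finset.univ := by
    intro h
    rw [← hcard, h, Finset.card_univ] at hlt
    omega
  obtain ⟨x, hx, w, hw, hxw⟩ := cross_edge hσ _ hSne hSne'
  rw [List.mem_toFinset] at hx
  rw [List.mem_toFinset] at hw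
  obtain ⟨s, t, rfl⟩ := List.append_of_mem hx
  set c' := (x :: t) ++ s with hc'def
  have hcyc' : Cyc G c' := by
    have := cyc_rotate hc s.length
    rwa [List.rotate_append_length_eq] at this
  have hperm : (s ++ x :: t).Perm c' := List.perm_append_comm
  refine ⟨c'.reverse ++ [w], by simp, ?_, ?_, ?_⟩
  · rw [List.Chain', List.isChain_append]
    refine ⟨List.isChain_reverse.2 (hcyc'.1.imp fun a b h => h.symm), List.isChain_singleton w, ?_⟩
    intro p hp q hq
    rw [List.getLast?_reverse] at hp
    simp only [hc'def, List.cons_append, List.head?_cons, Option.mem_some_iff] at hp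
    simp only [List.head?_cons, Option.mem_some_iff] at hq
    subst hp; subst hq
    exact hxw
  · rw [List.nodup_append]
    refine ⟨List.nodup_reverse.2 (hperm.nodup_iff.1 hnd), List.nodup_singleton w, ?_⟩
    intro p hp q hq
    rw [List.mem_singleton] at hq
    subst hq
    exact fun h => hw (h ▸ hperm.mem_iff.2 (List.mem_reverse.1 hp))
  · simp [hperm.length_eq.symm]

lemma grow (hσ : ∀ u v : V, u ≠ v → ¬ G.Adj u v →
      Fintype.card V - 1 ≤ G.degree u + G.degree v)
    {l : List V} (hne : l ≠ []) (hch : l.Chain' G.Adj) (hnd : l.Nodup)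
    (hlt : l.length < Fintype.card V) :
    ∃ l' : List V, l' ≠ [] ∧ l'.Chain' G.Adj ∧ l'.Nodup ∧ l'.length = l.length + 1 := by
  set v0 := l.head hne with hv0
  set vk := l.getLast hne with hvk
  by_cases h1 : ∃ w, w ∉ l ∧ G.Adj v0 w
  · obtain ⟨w, hwl, hadj⟩ := h1
    refine ⟨w :: l, by simp, ?_, List.nodup_cons.2 ⟨hwl, hnd⟩, by simp⟩
    rw [List.Chain', List.isChain_cons]
    refine ⟨?_, hch⟩
    intro y hy
    rw [List.head?_eq_head hne, Option.mem_some_iff] at hy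
    subst hy
    exact hadj.symm
  by_cases h2 : ∃ w, w ∉ l ∧ G.Adj vk w
  · obtain ⟨w, hwl, hadj⟩ := h2
    refine ⟨l ++ [w], by simp, ?_, ?_, by simp⟩
    · rw [List.Chain', List.isChain_append]
      refine ⟨hch, List.isChain_singleton w, ?_⟩
      intro x hx y hy
      rw [List.getLast?_eq_getLast_of_ne_nil hne, Option.mem_some_iff] at hx
      simp only [List.head?_cons, Option.mem_some_iff] at hy
      subst hx; subst hy
      exact hadj
    · rw [List.nodup_append]
      exact ⟨hnd, List.nodup_singleton w, fun p hp q hq => by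
        rw [List.mem_singleton] at hq; subst hq; exact fun h => hwl (h ▸ hp)⟩
  push_neg at h1 h2
  have hmem0 : ∀ y, G.Adj v0 y → y ∈ l := by
    intro y hy; by_contra hyl; exact h1 y hyl hy
  have hmemk : ∀ y, G.Adj vk y → y ∈ l := by
    intro y hy; by_contra hyl; exact h2 y hyl hy
  -- singleton case
  by_cases hlen1 : l.length = 1
  · obtain ⟨a, rfl⟩ := List.length_eq_one_iff.1 hlen1
    have hva : v0 = a := hv0
    have hmema : ∀ y, G.Adj v0 y → y = a := by
      intro y hy
      have := hmem0 y hy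
      rwa [List.mem_singleton] at this
    have hdeg0 : G.degree v0 = 0 := by
      rw [← card_neighborFinset_eq_degree, Finset.card_eq_zero, Finset.eq_empty_iff_forall_notMem]
      intro y hy
      rw [mem_neighborFinset] at hy
      have hy0 : y = a := hmema y hy
      rw [hy0, hva] at hy
      exact G.loopless.irrefl a hy
    have hcard2 : 1 < Fintype.card V := by
      simpa using hlt
    obtain ⟨b, hb⟩ := Fintype.exists_ne_of_one_lt_card hcard2 v0
    have hnadj : ¬ G.Adj v0 b := by
      intro h
      exact hb (by rw [hmema b h, ← hva])
    have h3 := hσ v0 b (Ne.symm hb) hnadj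
    rw [hdeg0, Nat.zero_add] at h3
    have h4 : G.degree b ≤ Fintype.card V - 2 := by
      rw [← card_neighborFinset_eq_degree]
      have hsub : G.neighborFinset b ⊆ (Finset.univ.erase b).erase v0 := by
        intro y hy
        rw [mem_neighborFinset] at hy
        refine Finset.mem_erase.2 ⟨?_, Finset.mem_erase.2 ⟨fun h => G.loopless.irrefl b (h ▸ hy), Finset.mem_univ y⟩⟩
        intro h
        exact hnadj (h ▸ hy).symm
      calc (G.neighborFinset b).card ≤ ((Finset.univ.erase b).erase v0).card :=
            Finset.card_le_card hsub
        _ = (Finset.univ.erase b).card - 1 :=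
            Finset.card_erase_of_mem (Finset.mem_erase.2 ⟨Ne.symm hb, Finset.mem_univ v0⟩)
        _ = Fintype.card V - 2 := by
            rw [Finset.card_erase_of_mem (Finset.mem_univ b), Finset.card_univ]
            omega
    omega
  -- main case: l.length ≥ 2
  have hk1 : 2 ≤ l.length := by
    have := List.length_pos_iff.2 hne
    omega
  set k := l.length - 1 with hkdef
  have hk : 1 ≤ k := by omega
  have hklen : l.length = k + 1 := by omega
  have hget0 : ∀ (h : 0 < l.length), l.get ⟨0, h⟩ = v0 := by
    intro h
    rw [hv0, List.head_eq_getElem_zero hne, List.get_eq_getElem]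
  have hgetk : ∀ (h : k < l.length), l.get ⟨k, h⟩ = vk := by
    intro h
    rw [hvk, List.getLast_eq_getElem]; rfl
  have hv0ne : v0 ≠ vk := by
    intro h
    have h0 : l.get ⟨0, by omega⟩ = l.get ⟨k, by omega⟩ := by
      rw [hget0, hgetk, h]
    have := List.nodup_iff_injective_get.1 hnd h0
    have := Fin.mk.injEq .. ▸ this
    omega
  -- construct a cyclic list c
  suffices hcyc : ∃ c : List V, Cyc G c ∧ c.Nodup ∧ c ≠ [] ∧ c.length = l.length by
    obtain ⟨c, hc, hcnd, hcne, hclen⟩ := hcyc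
    obtain ⟨l', h1', h2', h3', h4'⟩ := cyc_extend hσ hc hcnd hcne (hclen ▸ hlt)
    exact ⟨l', h1', h2', h3', by rw [h4', hclen]⟩
  by_cases hadj : G.Adj v0 vk
  · refine ⟨l, ⟨hch, ?_⟩, hnd, hne, rfl⟩
    intro x hx y hy
    rw [List.getLast?_eq_getLast_of_ne_nil hne, Option.mem_some_iff] at hx
    rw [List.head?_eq_head hne, Option.mem_some_iff] at hy
    subst hx; subst hy
    exact hadj.symm
  -- crossing argument
  have hss := hσ v0 vk hv0ne hadj
  set f : ℕ → V := fun i => l.getD i v0 with hf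
  have hfget : ∀ i (h : i < l.length), f i = l.get ⟨i, h⟩ := by
    intro i h
    rw [hf]
    exact List.getD_eq_getElem l v0 h
  set A : Finset ℕ := (Finset.range k).filter (fun i => G.Adj v0 (f (i+1))) with hA
  set B : Finset ℕ := (Finset.range k).filter (fun i => G.Adj vk (f i)) with hB
  have hdegA : G.degree v0 ≤ A.card := by
    rw [← card_neighborFinset_eq_degree]
    apply Finset.card_le_card_of_injOn (fun x => l.idxOf x - 1)
    · intro x hx
      rw [mem_coe, mem_neighborFinset] at hx
      have hxl : x ∈ l := hmem0 x hx
      have hilt : l.idxOf x < l.length := List.idxOf_lt_length_iff.2 hxl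
      have hxne : l.idxOf x ≠ 0 := by
        intro h
        have hg := List.idxOf_get hilt
        rw [show (⟨l.idxOf x, hilt⟩ : Fin l.length) = ⟨0, by omega⟩ from Fin.ext h, hget0] at hg
        rw [← hg] at hx
        exact G.loopless.irrefl v0 hx
      rw [Finset.mem_coe, hA, Finset.mem_filter, Finset.mem_range]
      beta_reduce
      constructor
      · omega
      · have : l.idxOf x - 1 + 1 = l.idxOf x := by omega
        rw [this, hfget _ hilt, List.idxOf_get hilt]
        exact hx
    · intro x hx y hy hxy
      simp only [mem_coe, mem_neighborFinset] at hx hy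
      have hxl : x ∈ l := hmem0 x hx
      have hyl : y ∈ l := hmem0 y hy
      have hx0 : l.idxOf x ≠ 0 := by
        intro h
        have hg := List.idxOf_get (List.idxOf_lt_length_iff.2 hxl)
        rw [show (⟨l.idxOf x, _⟩ : Fin l.length) = ⟨0, by omega⟩ from Fin.ext h, hget0] at hg
        rw [← hg] at hx
        exact G.loopless.irrefl v0 hx
      have hy0 : l.idxOf y ≠ 0 := by
        intro h
        have hg := List.idxOf_get (List.idxOf_lt_length_iff.2 hyl)
        rw [show (⟨l.idxOf y, _⟩ : Fin l.length) = ⟨0, by omega⟩ from Fin.ext h, hget0] at hg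
        rw [← hg] at hy
        exact G.loopless.irrefl v0 hy
      simp only at hxy
      have : l.idxOf x = l.idxOf y := by omega
      have h1 := List.idxOf_get (List.idxOf_lt_length_iff.2 hxl)
      have h2 := List.idxOf_get (List.idxOf_lt_length_iff.2 hyl)
      rw [← h1, ← h2]
      congr 1
      exact Fin.ext this
  have hdegB : G.degree vk ≤ B.card := by
    rw [← card_neighborFinset_eq_degree]
    apply Finset.card_le_card_of_injOn (fun x => l.idxOf x)
    · intro x hx
      rw [mem_coe, mem_neighborFinset] at hx
      have hxl : x ∈ l := hmemk x hx
      have hilt : l.idxOf x < l.length := List.idxOf_lt_length_iff.2 hxl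
      have hxne : l.idxOf x ≠ k := by
        intro h
        have hg := List.idxOf_get hilt
        rw [show (⟨l.idxOf x, hilt⟩ : Fin l.length) = ⟨k, by omega⟩ from Fin.ext h, hgetk] at hg
        rw [← hg] at hx
        exact G.loopless.irrefl vk hx
      rw [Finset.mem_coe, hB, Finset.mem_filter, Finset.mem_range]
      beta_reduce
      refine ⟨by omega, ?_⟩
      rw [hfget _ hilt, List.idxOf_get hilt]
      exact hx
    · intro x hx y hy hxy
      rw [mem_coe, mem_neighborFinset] at hx hy
      have h1 := List.idxOf_get (List.idxOf_lt_length_iff.2 (hmemk x hx))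
      have h2 := List.idxOf_get (List.idxOf_lt_length_iff.2 (hmemk y hy))
      rw [← h1, ← h2]
      congr 1
      exact Fin.ext hxy
  have hABsub : A ∪ B ⊆ Finset.range k := by
    intro i hi
    rcases Finset.mem_union.1 hi with h | h
    · exact Finset.mem_of_mem_filter i h
    · exact Finset.mem_of_mem_filter i h
  have hABcard : (A ∪ B).card ≤ k := by
    have := Finset.card_le_card hABsub
    rwa [Finset.card_range] at this
  have hint : (A ∩ B).Nonempty := by
    rw [← Finset.card_pos]
    have := Finset.card_union_add_card_inter A B
    omega
  obtain ⟨i, hi⟩ := hint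
  obtain ⟨hiA, hiB⟩ := Finset.mem_inter.1 hi
  rw [hA, Finset.mem_filter, Finset.mem_range] at hiA
  rw [hB, Finset.mem_filter, Finset.mem_range] at hiB
  obtain ⟨hik, hAi⟩ := hiA
  obtain ⟨-, hBi⟩ := hiB
  -- c = take (i+1) ++ reverse (drop (i+1))
  set c : List V := l.take (i+1) ++ (l.drop (i+1)).reverse with hcdef
  have hperm : c.Perm l := by
    have h := List.Perm.append_left (l.take (i+1)) (List.reverse_perm (l.drop (i+1)))
    rwa [List.take_append_drop] at h
  have hi1lt : i + 1 < l.length := by omega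
  have hilt : i < l.length := by omega
  have htake_ne : l.take (i+1) ≠ [] := by
    intro h
    have := congrArg List.length h
    rw [List.length_take, List.length_nil] at this
    omega
  have hdrop_ne : l.drop (i+1) ≠ [] := by
    intro h
    have := congrArg List.length h
    rw [List.length_drop, List.length_nil] at this
    omega
  have htake_last : (l.take (i+1)).getLast? = some (f i) := by
    rw [List.take_succ]
    have : l[i]? = some (f i) := by
      rw [List.getElem?_eq_getElem hilt]
      rw [hfget i hilt]
      rfl
    rw [this]
    exact List.getLast?_concat
  have hdrop_head : (l.drop (i+1)).head? = some (f (i+1)) := by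
    rw [List.head?_drop]
    rw [List.getElem?_eq_getElem hi1lt]
    rw [hfget _ hi1lt]
    rfl
  have htake_head : (l.take (i+1)).head? = some v0 := by
    rw [List.head?_take, if_neg (by omega : ¬ i + 1 = 0)]
    exact List.head?_eq_head hne
  have hdrop_last : (l.drop (i+1)).getLast? = some vk := by
    conv_rhs => rw [hvk]
    rw [← List.getLast?_eq_getLast_of_ne_nil hne]
    conv_rhs => rw [← List.take_append_drop (i+1) l]
    rw [List.getLast?_append_of_ne_nil _ hdrop_ne]
  refine ⟨c, ⟨?_, ?_⟩, hperm.nodup_iff.2 hnd, by simp [hcdef, htake_ne], hperm.length_eq⟩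
  · rw [hcdef, List.Chain', List.isChain_append]
    refine ⟨hch.prefix (List.take_prefix _ _),
      List.isChain_reverse.2 ((hch.suffix (List.drop_suffix _ _)).imp fun a b h => h.symm), ?_⟩
    intro x hx y hy
    rw [htake_last, Option.mem_some_iff] at hx
    rw [List.head?_reverse, hdrop_last, Option.mem_some_iff] at hy
    subst hx; subst hy
    exact hBi.symm
  · intro x hx y hy
    rw [hcdef, List.getLast?_append_of_ne_nil _ (by simpa using hdrop_ne),
      List.getLast?_reverse, hdrop_head, Option.mem_some_iff] at hx
    rw [hcdef, List.head?_append_of_ne_nil _ htake_ne, htake_head, Option.mem_some_iff] at hy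
    subst hx; subst hy
    exact hAi.symm

lemma exists_spanning (hσ : ∀ u v : V, u ≠ v → ¬ G.Adj u v →
      Fintype.card V - 1 ≤ G.degree u + G.degree v) [Nonempty V] :
    ∃ l : List V, l ≠ [] ∧ l.Chain' G.Adj ∧ l.Nodup ∧ l.length = Fintype.card V := by
  have key : ∀ m : ℕ, ∃ l : List V, l ≠ [] ∧ l.Chain' G.Adj ∧ l.Nodup ∧
      min (m+1) (Fintype.card V) ≤ l.length := by
    intro m
    induction m with
    | zero =>
        refine ⟨[Classical.arbitrary V], by simp, List.isChain_singleton _, List.nodup_singleton _, ?_⟩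
        simp only [List.length_singleton]
        omega
    | succ m ih =>
        obtain ⟨l, hne, hch, hnd, hlen⟩ := ih
        by_cases hlt : l.length < Fintype.card V
        · obtain ⟨l', h1, h2, h3, h4⟩ := grow hσ hne hch hnd hlt
          exact ⟨l', h1, h2, h3, by omega⟩
        · exact ⟨l, hne, hch, hnd, by omega⟩
  obtain ⟨l, hne, hch, hnd, hlen⟩ := key (Fintype.card V)
  have hle : l.length ≤ Fintype.card V := hnd.length_le_card
  exact ⟨l, hne, hch, hnd, by omega⟩

/-- If a graph `G` of order `n` satisfies `σ(G) ≥ n - 1` (the sum of the degrees of any two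
non-adjacent vertices is at least `n - 1`), then `G` is traceable, i.e. has a Hamiltonian path. -/
theorem sigma_ge_sub_one_traceable {V : Type} [Fintype V] [Nonempty V] [DecidableEq V]
    (G : SimpleGraph V) [DecidableRel G.Adj]
    (hσ : ∀ u v : V, u ≠ v → ¬ G.Adj u v →
      Fintype.card V - 1 ≤ G.degree u + G.degree v) :
    ∃ (u v : V) (p : G.Walk u v), p.IsHamiltonian := by
  obtain ⟨l, hne, hch, hnd, hlen⟩ := exists_spanning hσ
  obtain ⟨u, v, p, hp⟩ := exists_walk_of_chain l hne hch
  refine ⟨u, v, p, ?_⟩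
  intro a
  have hmem : a ∈ l := by
    have : l.toFinset = Finset.univ := by
      apply Finset.eq_univ_of_card
      rw [List.toFinset_card_of_nodup hnd, hlen]
    have := this ▸ Finset.mem_univ a
    rwa [List.mem_toFinset] at this
  rw [hp]
  exact List.count_eq_one_of_mem hnd hmem
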